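/- Let R, t₁, t₂ be real numbers satisfying the two-machine delay system together with its numeric localization 1.5460 < R < 1.5462, 0.2389 < t₁ < 0.2390, 0.8532 < t₂ < 0.8533. Define u = √(R−1), c = (1+u)/(2R−1−u) and p = (1 − 1/R)·(1 + t₁). Then ((t₁+1) + (t₁ + c·p) + p) / (1 + t₁ + p) < R and ((t₁+1) + 2·(t₁ + c·p) + 3·p) / (1 + 2·t₁ + 3·p) < R. -/

import Mathlib

set_option maxHeartbeats 1000000 in
theorem stmt_13 (R t₁ t₂ : ℝ)
    (hR : 1 < R) (hR2 : R < 2) (h0 : 0 < t₁) (h12 : t₁ < t₂) (h21 : t₂ < 1)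
    (e1 : R * t₁ = t₁ + (1 - Real.sqrt (R - 1)) / 2)
    (e2 : R * t₂ = (2 + t₁ + t₂) / 2 - Real.sqrt (R - 1) * (t₂ - t₁) / 2)
    (e3 : R = 1 + (t₁ + t₂) / 2)
    (nR1 : 1.5460 < R) (nR2 : R < 1.5462)
    (n11 : 0.2389 < t₁) (n12 : t₁ < 0.2390)
    (n21 : 0.8532 < t₂) (n22 : t₂ < 0.8533)
    (u c p : ℝ)
    (hu : u = Real.sqrt (R - 1))
    (hc : c = (1 + u) / (2 * R - 1 - u))
    (hp : p = (1 - 1 / R) * (1 + t₁)) :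
    ((t₁ + 1) + (t₁ + c * p) + p) / (1 + t₁ + p) < R ∧
    ((t₁ + 1) + 2 * (t₁ + c * p) + 3 * p) / (1 + 2 * t₁ + 3 * p) < R := by
  have hR0 : (0:ℝ) < R := by linarith
  have hu0 : 0 ≤ u := hu ▸ Real.sqrt_nonneg _
  have hu2 : u ^ 2 = R - 1 := by
    rw [hu, sq, Real.mul_self_sqrt (by linarith)]
  have hul : 0.7389 < u := by nlinarith
  have huu : u < 0.7391 := by nlinarith
  have hden : (0:ℝ) < 2 * R - 1 - u := by linarith
  have hcl : 1.284 < c := by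
    rw [hc, lt_div_iff₀ hden]; linarith
  have hcu : c < 1.286 := by
    rw [hc, div_lt_iff₀ hden]; linarith
  have hpeq : p * R = (R - 1) * (1 + t₁) := by
    rw [hp]; field_simp
  have hRt1 : R * t₁ > 1.546 * t₁ + 0.2389 * R - 1.546 * 0.2389 := by
    have h := mul_pos (by linarith : (0:ℝ) < R - 1.546) (by linarith : (0:ℝ) < t₁ - 0.2389)
    linarith [h]
  have hRt2 : R * t₁ < 1.546 * t₁ + 0.239 * R - 1.546 * 0.239 := by
    have h := mul_pos (by linarith : (0:ℝ) < R - 1.546) (by linarith : (0:ℝ) < 0.239 - t₁)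
    linarith [h]
  have hpl : 0.437 < p := by
    have key : 0.437 * R < p * R := by rw [hpeq]; linarith [hRt1]
    exact (mul_lt_mul_iff_left₀ hR0).mp key
  have hpu : p < 0.4378 := by
    have key : p * R < 0.4378 * R := by rw [hpeq]; nlinarith [hRt2]
    exact (mul_lt_mul_iff_left₀ hR0).mp key
  have hcp : c * p < 0.5631 := by
    have h := mul_pos (by linarith : (0:ℝ) < 1.286 - c) (by linarith : (0:ℝ) < p)
    linarith [h]
  have hRp : R * p > 1.546 * p + 0.437 * R - 1.546 * 0.437 := by
    have h := mul_pos (by linarith : (0:ℝ) < R - 1.546) (by linarith : (0:ℝ) < p - 0.437)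
    linarith [h]
  constructor
  · rw [div_lt_iff₀ (by linarith)]
    linarith [hcp, hRt1, hRp]
  · rw [div_lt_iff₀ (by linarith)]
    linarith [hcp, hRt1, hRp]
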